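/- Let M be a complex matrix whose rows and columns are both indexed by a finite set I, let l ∈ I with M^{ll} ≠ 0, and define on indices i,k ∈ I∖{l} the updated matrix N by N^{ik} = M^{ik} − M^{il}M^{lk}/M^{ll}. Then for any tuples A of distinct row indices in I∖{l} and B of distinct column indices in I∖{l} of equal length, the minors satisfy N^{A,B} = M^{lA,lB}/M^{ll}, where lA and lB denote the tuples obtained by prepending l. -/
import Mathlib


/-- The minor `M^{A,B}` of a matrix `M` with rows selected by the tuple `A`
and columns selected by the tuple `B`; for `s = 0` this equals `1`. -/
noncomputable def minor {I J : Type*} (M : I → J → ℂ) {s : ℕ}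
    (A : Fin s → I) (B : Fin s → J) : ℂ :=
  Matrix.det (Matrix.of fun α β => M (A α) (B β))

/-- If `N^{ik} = M^{ik} − M^{il}M^{lk}/M^{ll}` on the indices different from `l`,
then for tuples `A`, `B` of distinct indices avoiding `l`,
the minors evolve by `N^{A,B} = M^{lA,lB}/M^{ll}`. -/
theorem minor_evolution {I : Type*} (M : I → I → ℂ) (l : I) (hl : M l l ≠ 0)
    (N : I → I → ℂ)
    (hN : ∀ i k, i ≠ l → k ≠ l → N i k = M i k - M i l * M l k / M l l)
    {s : ℕ} (A B : Fin s → I)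
    (hA : Function.Injective A) (hB : Function.Injective B)
    (hAl : ∀ α, A α ≠ l) (hBl : ∀ β, B β ≠ l) :
    minor N A B = minor M (Fin.cons l A) (Fin.cons l B) / M l l := by
  classical
  set e : Fin 1 ⊕ Fin s ≃ Fin (s + 1) := finSumFinEquiv.trans (finCongr (Nat.add_comm 1 s))
    with he
  have h0 : ∀ i : Fin 1, e (Sum.inl i) = 0 := by
    intro i
    ext
    simp [he, finSumFinEquiv]
  have hsucc : ∀ i : Fin s, e (Sum.inr i) = i.succ := by
    intro i
    ext
    simp [he, finSumFinEquiv]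
  set A11 : Matrix (Fin 1) (Fin 1) ℂ := Matrix.of fun _ _ => M l l with hA11
  set A12 : Matrix (Fin 1) (Fin s) ℂ := Matrix.of fun _ j => M l (B j) with hA12
  set A21 : Matrix (Fin s) (Fin 1) ℂ := Matrix.of fun i _ => M (A i) l with hA21
  set A22 : Matrix (Fin s) (Fin s) ℂ := Matrix.of fun i j => M (A i) (B j) with hA22
  set W : Matrix (Fin 1) (Fin 1) ℂ := Matrix.of fun _ _ => (M l l)⁻¹ with hW
  letI inst : Invertible A11 := by
    refine ⟨W, ?_, ?_⟩ <;>
    · ext i j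
      fin_cases i; fin_cases j
      simp [hA11, hW, Matrix.mul_apply, Fin.sum_univ_one, inv_mul_cancel₀ hl,
        mul_inv_cancel₀ hl]
  have hinv : ⅟A11 = W := rfl
  have hP : minor M (Fin.cons l A) (Fin.cons l B)
      = Matrix.det (Matrix.fromBlocks A11 A12 A21 A22) := by
    rw [minor, ← Matrix.det_submatrix_equiv_self e]
    congr 1
    ext x y
    cases x with
    | inl i =>
      cases y with
      | inl j => simp [Matrix.submatrix, h0, hA11]
      | inr j => simp [Matrix.submatrix, h0, hsucc, hA12]
    | inr i =>
      cases y with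
      | inl j => simp [Matrix.submatrix, h0, hsucc, hA21]
      | inr j => simp [Matrix.submatrix, hsucc, hA22]
  have hblock : Matrix.det (Matrix.fromBlocks A11 A12 A21 A22)
      = M l l * minor N A B := by
    rw [Matrix.det_fromBlocks₁₁, hinv]
    congr 1
    · simp [hA11, Matrix.det_fin_one]
    · rw [minor]
      congr 1
      ext i j
      have := hN (A i) (B j) (hAl i) (hBl j)
      simp only [Matrix.sub_apply, Matrix.mul_apply, Fin.sum_univ_one,
        hA22, hA21, hA12, hW, Matrix.of_apply, this]
      field_simp
  rw [hP, hblock]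
  field_simp
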